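/- arXiv:1805.04165 — 2 statements merged into one kernel-verified Lean document; each statement's English description precedes it below -/
import Mathlib

section
/- Let c > 0. There exists a constant L > 0, depending only on c, with the following property: for every n ≥ 1 and every collection X_1, …, X_n of mutually independent integer-valued random variables with means μ_i = E[X_i] satisfying Pr[X_i − μ_i ≥ t] ≤ exp(−c·t) for every i ∈ [n] and every real t > 0, it holds that Pr[Σ_{i=1}^n (X_i − μ_i) ≥ t] ≤ exp(−(c/3)·t) for every real t ≥ L·n. -/
open MeasureTheory ProbabilityTheory

/-- Layer-cake bound on the exponential moment of a random variable with an
exponential upper tail. -/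
lemma tail_exp_lintegral_le_two {Ω : Type} [MeasureSpace Ω]
    [IsProbabilityMeasure (ℙ : Measure Ω)]
    {c : ℝ} (hc : 0 < c) {Y : Ω → ℝ} (hY : Measurable Y)
    (htail : ∀ t : ℝ, 0 < t → (ℙ {ω | Y ω ≥ t}).toReal ≤ Real.exp (-c * t)) :
    ∫⁻ ω, ENNReal.ofReal (Real.exp (c / 2 * Y ω)) ∂ℙ ≤ 2 := by
  have hf : Measurable fun ω => Real.exp (c / 2 * Y ω) := (hY.const_mul _).exp
  rw [MeasureTheory.lintegral_eq_lintegral_meas_lt ℙ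
    (Filter.Eventually.of_forall fun ω => (Real.exp_pos _).le) hf.aemeasurable]
  have hsplit : Set.Ioi (0 : ℝ) = Set.Ioc 0 1 ∪ Set.Ioi 1 :=
    (Set.Ioc_union_Ioi_eq_Ioi zero_le_one).symm
  rw [hsplit, MeasureTheory.lintegral_union measurableSet_Ioi Set.Ioc_disjoint_Ioi_same]
  have h1 : ∫⁻ t in Set.Ioc (0 : ℝ) 1, ℙ {a | t < Real.exp (c / 2 * Y a)} ≤ 1 := by
    calc ∫⁻ t in Set.Ioc (0 : ℝ) 1, ℙ {a | t < Real.exp (c / 2 * Y a)}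
        ≤ ∫⁻ _ in Set.Ioc (0 : ℝ) 1, 1 := lintegral_mono fun t => prob_le_one
      _ = volume (Set.Ioc (0 : ℝ) 1) := setLIntegral_one _
      _ = 1 := by simp [Real.volume_Ioc]
  have h2 : ∫⁻ t in Set.Ioi (1 : ℝ), ℙ {a | t < Real.exp (c / 2 * Y a)} ≤ 1 := by
    have hb : ∀ t ∈ Set.Ioi (1 : ℝ),
        ℙ {a | t < Real.exp (c / 2 * Y a)} ≤ ENNReal.ofReal (t ^ (-2 : ℝ)) := by
      intro t ht
      have ht1 : (1 : ℝ) < t := ht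
      have hlog : 0 < Real.log t := Real.log_pos ht1
      have hsub : {a | t < Real.exp (c / 2 * Y a)} ⊆ {ω | Y ω ≥ 2 / c * Real.log t} := by
        intro a ha
        simp only [Set.mem_setOf_eq] at ha ⊢
        have h' : Real.log t < c / 2 * Y a := by
          have := Real.log_lt_log (by linarith : (0 : ℝ) < t) ha
          rwa [Real.log_exp] at this
        rw [ge_iff_le, div_mul_eq_mul_div, div_le_iff₀ hc]
        nlinarith
      calc ℙ {a | t < Real.exp (c / 2 * Y a)}
          ≤ ℙ {ω | Y ω ≥ 2 / c * Real.log t} := measure_mono hsub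
        _ = ENNReal.ofReal ((ℙ {ω | Y ω ≥ 2 / c * Real.log t}).toReal) :=
            (ENNReal.ofReal_toReal (measure_ne_top _ _)).symm
        _ ≤ ENNReal.ofReal (Real.exp (-c * (2 / c * Real.log t))) :=
            ENNReal.ofReal_le_ofReal (htail _ (by positivity))
        _ = ENNReal.ofReal (t ^ (-2 : ℝ)) := by
            rw [Real.rpow_def_of_pos (by linarith : (0 : ℝ) < t)]
            congr 1
            field_simp
    calc ∫⁻ t in Set.Ioi (1 : ℝ), ℙ {a | t < Real.exp (c / 2 * Y a)}
        ≤ ∫⁻ t in Set.Ioi (1 : ℝ), ENNReal.ofReal (t ^ (-2 : ℝ)) :=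
          setLIntegral_mono' measurableSet_Ioi hb
      _ = ENNReal.ofReal (∫ t in Set.Ioi (1 : ℝ), t ^ (-2 : ℝ)) :=
          (MeasureTheory.ofReal_integral_eq_lintegral_ofReal
            (integrableOn_Ioi_rpow_of_lt (by norm_num) one_pos)
            ((ae_restrict_iff' measurableSet_Ioi).2 (Filter.Eventually.of_forall
              fun x hx => Real.rpow_nonneg (by simp only [Set.mem_Ioi] at hx; linarith) _))).symm
      _ = 1 := by
          rw [integral_Ioi_rpow_of_lt (by norm_num) one_pos]
          norm_num
  calc (∫⁻ t in Set.Ioc (0 : ℝ) 1, ℙ {a | t < Real.exp (c / 2 * Y a)}) +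
        ∫⁻ t in Set.Ioi (1 : ℝ), ℙ {a | t < Real.exp (c / 2 * Y a)}
      ≤ 1 + 1 := add_le_add h1 h2
    _ = 2 := by norm_num

lemma tail_exp_integrable_and_mgf_le_two {Ω : Type} [MeasureSpace Ω]
    [IsProbabilityMeasure (ℙ : Measure Ω)]
    {c : ℝ} (hc : 0 < c) {Y : Ω → ℝ} (hY : Measurable Y)
    (htail : ∀ t : ℝ, 0 < t → (ℙ {ω | Y ω ≥ t}).toReal ≤ Real.exp (-c * t)) :
    Integrable (fun ω => Real.exp (c / 2 * Y ω)) ℙ ∧ mgf Y ℙ (c / 2) ≤ 2 := by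
  have hf : Measurable fun ω => Real.exp (c / 2 * Y ω) := (hY.const_mul _).exp
  have hlin := tail_exp_lintegral_le_two hc hY htail
  have hint : Integrable (fun ω => Real.exp (c / 2 * Y ω)) ℙ := by
    refine ⟨hf.aestronglyMeasurable, ?_⟩
    rw [MeasureTheory.hasFiniteIntegral_iff_ofReal
      (Filter.Eventually.of_forall fun ω => (Real.exp_pos _).le)]
    exact lt_of_le_of_lt hlin (by norm_num)
  refine ⟨hint, ?_⟩
  have : mgf Y ℙ (c / 2) = (∫⁻ ω, ENNReal.ofReal (Real.exp (c / 2 * Y ω)) ∂ℙ).toReal := by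
    rw [mgf]
    exact MeasureTheory.integral_eq_lintegral_of_nonneg_ae
      (Filter.Eventually.of_forall fun ω => (Real.exp_pos _).le) hf.aestronglyMeasurable
  rw [this]
  calc (∫⁻ ω, ENNReal.ofReal (Real.exp (c / 2 * Y ω)) ∂ℙ).toReal
      ≤ (2 : ENNReal).toReal := ENNReal.toReal_mono (by norm_num) hlin
    _ = 2 := by norm_num

/-- For c > 0 there is L > 0 depending only on c such that for any
n ≥ 1 independent integer-valued random variables X_1, …, X_n with means μ_i and
Pr[X_i − μ_i ≥ t] ≤ exp(−c·t) for all t > 0, we have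
Pr[Σ (X_i − μ_i) ≥ t] ≤ exp(−(c/3)·t) for every t ≥ L·n. -/
theorem sum_of_tail_bounded_concentration (c : ℝ) (hc : 0 < c) :
    ∃ L : ℝ, 0 < L ∧
      ∀ (n : ℕ), 1 ≤ n →
      ∀ (Ω : Type) [MeasureSpace Ω] [IsProbabilityMeasure (ℙ : Measure Ω)]
        (X : Fin n → Ω → ℤ),
        (∀ i, Measurable (X i)) →
        (∀ i, Integrable (fun ω => (X i ω : ℝ)) ℙ) →
        iIndepFun X ℙ →
        (∀ i, ∀ t : ℝ, 0 < t →
          (ℙ {ω | (X i ω : ℝ) - (∫ ω', (X i ω' : ℝ) ∂ℙ) ≥ t}).toReal ≤ Real.exp (-c * t)) →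
        ∀ t : ℝ, L * n ≤ t →
          (ℙ {ω | (∑ i, ((X i ω : ℝ) - (∫ ω', (X i ω' : ℝ) ∂ℙ))) ≥ t}).toReal ≤
            Real.exp (-(c / 3) * t) := by
  refine ⟨6 * Real.log 2 / c, by positivity, ?_⟩
  intro n hn Ω _ _ X hXmeas hXint hindep htail t ht
  set Y : Fin n → Ω → ℝ := fun i ω => (X i ω : ℝ) - (∫ ω', (X i ω' : ℝ) ∂ℙ) with hYdef
  have hYmeas : ∀ i, Measurable (Y i) := fun i =>
    ((hXmeas i).comp measurable_id |> fun h => ((measurable_from_top.comp (hXmeas i)).sub measurable_const : Measurable (Y i)))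
  have hYindep : iIndepFun Y ℙ := by
    have := hindep.comp (fun i => fun z : ℤ => (z : ℝ) - (∫ ω', (X i ω' : ℝ) ∂ℙ))
      (fun i => measurable_from_top)
    exact this
  have hYint : ∀ i, Integrable (fun ω => Real.exp (c / 2 * Y i ω)) ℙ ∧ mgf (Y i) ℙ (c / 2) ≤ 2 :=
    fun i => tail_exp_integrable_and_mgf_le_two hc (hYmeas i) (htail i)
  -- sum
  set S : Ω → ℝ := ∑ i, Y i with hSdef
  have hSint : Integrable (fun ω => Real.exp (c / 2 * S ω)) ℙ :=
    hYindep.integrable_exp_mul_sum hYmeas (fun i _ => (hYint i).1)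
  have hmgfS : mgf S ℙ (c / 2) ≤ 2 ^ n := by
    rw [hSdef, hYindep.mgf_sum hYmeas]
    calc ∏ i, mgf (Y i) ℙ (c / 2) ≤ ∏ _i : Fin n, (2 : ℝ) :=
          Finset.prod_le_prod (fun i _ => mgf_nonneg) (fun i _ => (hYint i).2)
      _ = 2 ^ n := by simp
  have hchern := measure_ge_le_exp_mul_mgf (μ := ℙ) (X := S) t (by positivity : (0:ℝ) ≤ c / 2) hSint
  have hset : {ω | (∑ i, ((X i ω : ℝ) - (∫ ω', (X i ω' : ℝ) ∂ℙ))) ≥ t} = {ω | t ≤ S ω} := by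
    ext ω
    simp [hSdef, hYdef, Finset.sum_apply, ge_iff_le]
  rw [hset]
  have hLn : 6 * Real.log 2 / c * n ≤ t := ht
  have hlog2 : (0:ℝ) < Real.log 2 := Real.log_pos (by norm_num)
  have htpos : 0 < t := lt_of_lt_of_le (by
    have : (1:ℝ) ≤ (n:ℝ) := by exact_mod_cast hn
    have : 0 < 6 * Real.log 2 / c * n := by positivity
    exact this) hLn
  calc (ℙ {ω | t ≤ S ω}).toReal ≤ Real.exp (-(c / 2) * t) * mgf S ℙ (c / 2) := hchern
    _ ≤ Real.exp (-(c / 2) * t) * 2 ^ n := by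
        apply mul_le_mul_of_nonneg_left hmgfS (Real.exp_pos _).le
    _ = Real.exp (-(c / 2) * t + n * Real.log 2) := by
        rw [Real.exp_add]
        congr 1
        rw [mul_comm (n : ℝ) (Real.log 2), Real.exp_mul, Real.exp_log (by norm_num : (0:ℝ) < 2)]
        norm_num
    _ ≤ Real.exp (-(c / 3) * t) := by
        apply Real.exp_le_exp.2
        have h6 : (n : ℝ) * Real.log 2 ≤ c / 6 * t := by
          have := hLn
          rw [div_mul_eq_mul_div, div_le_iff₀ hc] at this
          nlinarith
        nlinarith
end

section
/- Fix p ∈ (0,1). There exists a constant C > 0, depending only on p, such that for every T ≥ 1 and every integer Δ ≥ 2 the following holds: if Y_1, Y_2, …, Y_T are mutually independent random variables where each Y_i is the maximum of at most Δ mutually independent geometric random variables, each with success probability at least p, then Pr[Σ_{i=1}^T Y_i ≥ C·(T·ln Δ + t)] ≤ exp(−t) for every real t ≥ 0. -/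
open MeasureTheory ProbabilityTheory
open scoped ENNReal

lemma geo_tail {Ω : Type} [MeasureSpace Ω] [IsProbabilityMeasure (ℙ : Measure Ω)]
    (G : Ω → ℕ) (hG : Measurable G) (q : ℝ) (hq0 : 0 < q) (hq1 : q < 1)
    (hpmf : ∀ s : ℕ, (ℙ {ω | G ω = s}).toReal = q * (1 - q) ^ s) (m : ℕ) :
    ℙ {ω | m ≤ G ω} = ENNReal.ofReal ((1 - q) ^ m) := by
  have hq1' : 0 ≤ 1 - q := by linarith
  have hpmf' : ∀ s : ℕ, ℙ {ω | G ω = s} = ENNReal.ofReal (q * (1 - q) ^ s) := by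
    intro s
    rw [← hpmf s, ENNReal.ofReal_toReal (measure_ne_top _ _)]
  have hset : {ω | m ≤ G ω} = ⋃ u : ℕ, {ω | G ω = m + u} := by
    ext ω
    simp only [Set.mem_setOf_eq, Set.mem_iUnion]
    constructor
    · intro h; exact ⟨G ω - m, by omega⟩
    · rintro ⟨u, hu⟩; omega
  have hmeas : ∀ u : ℕ, MeasurableSet {ω | G ω = m + u} := fun u => hG (measurableSet_singleton (m + u))
  have hdisj : Pairwise (Function.onFun Disjoint (fun u : ℕ => {ω | G ω = m + u})) := by
    intro u v huv
    simp only [Function.onFun, Set.disjoint_left, Set.mem_setOf_eq]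
    intro ω h1 h2; exact huv (by omega)
  rw [hset, measure_iUnion hdisj hmeas]
  · have : ∀ u : ℕ, ℙ {ω | G ω = m + u} = ENNReal.ofReal (q * (1 - q) ^ (m + u)) :=
      fun u => hpmf' (m + u)
    simp_rw [this]
    rw [← ENNReal.ofReal_tsum_of_nonneg]
    · congr 1
      have : ∀ u : ℕ, q * (1 - q) ^ (m + u) = (q * (1 - q) ^ m) * (1 - q) ^ u := by
        intro u; rw [pow_add]; ring
      simp_rw [this]
      rw [tsum_mul_left, tsum_geometric_of_lt_one hq1' (by linarith)]
      rw [sub_sub_cancel]; field_simp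
    · intro u; positivity
    · apply Summable.mul_left
      exact summable_geometric_of_lt_one hq1' (by linarith) |>.comp_injective (add_right_injective m)

lemma pow_identity (b : ℝ) (n : ℕ) :
    1 + ∑ s ∈ Finset.range n, (b - 1) * b ^ s = b ^ n := by
  induction n with
  | zero => simp
  | succ n ih => rw [Finset.sum_range_succ, ← add_assoc, ih]; ring

lemma lintegral_exp_le {Ω : Type} [MeasureSpace Ω] [IsProbabilityMeasure (ℙ : Measure Ω)]
    (Y : Ω → ℕ) (hY : Measurable Y) (r : ℝ) (hr0 : 0 < r) (hr1 : r < 1) (Δ : ℕ) (hΔ : 1 ≤ Δ)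
    (htail : ∀ s : ℕ, ℙ {ω | s + 1 ≤ Y ω} ≤ Δ * ENNReal.ofReal ((r ^ 2) ^ (s + 1))) :
    ∫⁻ ω, ENNReal.ofReal (r⁻¹ ^ Y ω) ∂ℙ ≤ 2 * Δ := by
  have hb : 1 ≤ r⁻¹ := (one_le_inv₀ hr0).mpr hr1.le
  have hb0 : 0 ≤ r⁻¹ - 1 := by linarith
  set c : ℕ → ℝ≥0∞ := fun s => ENNReal.ofReal ((r⁻¹ - 1) * r⁻¹ ^ s) with hc
  have hsetmeas : ∀ s : ℕ, MeasurableSet {ω : Ω | s + 1 ≤ Y ω} :=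
    fun s => hY (measurableSet_Ici (a := s + 1))
  have hpoint : ∀ ω : Ω, ENNReal.ofReal (r⁻¹ ^ Y ω)
      = 1 + ∑' s : ℕ, Set.indicator {ω' : Ω | s + 1 ≤ Y ω'} (fun _ => c s) ω := by
    intro ω
    have h1 : ∀ s : ℕ, Set.indicator {ω' : Ω | s + 1 ≤ Y ω'} (fun _ => c s) ω
        = if s + 1 ≤ Y ω then c s else 0 := by
      intro s; rw [Set.indicator_apply]; rfl
    simp_rw [h1]
    rw [tsum_eq_sum (s := Finset.range (Y ω))
      (by intro b hb'; rw [if_neg]; simp only [Finset.mem_range] at hb'; omega)]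
    have h2 : ∀ s ∈ Finset.range (Y ω), (if s + 1 ≤ Y ω then c s else 0) = c s := by
      intro s hs; rw [if_pos]; simp only [Finset.mem_range] at hs; omega
    rw [Finset.sum_congr rfl h2, hc]
    rw [← ENNReal.ofReal_sum_of_nonneg (fun s _ => by positivity), ← ENNReal.ofReal_one,
      ← ENNReal.ofReal_add (by norm_num) (by positivity), pow_identity]
  calc ∫⁻ ω, ENNReal.ofReal (r⁻¹ ^ Y ω) ∂ℙ
      = ∫⁻ ω, (1 + ∑' s : ℕ, Set.indicator {ω' : Ω | s + 1 ≤ Y ω'} (fun _ => c s) ω) ∂ℙ := by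
        exact lintegral_congr hpoint
    _ = 1 + ∑' s : ℕ, c s * ℙ {ω : Ω | s + 1 ≤ Y ω} := by
        rw [lintegral_add_left measurable_const, lintegral_one, measure_univ,
          lintegral_tsum (fun s => ((measurable_const.indicator (hsetmeas s)).aemeasurable))]
        congr 1
        refine tsum_congr fun s => ?_
        exact lintegral_indicator_const (hsetmeas s) (c s)
    _ ≤ 1 + ∑' s : ℕ, c s * ((Δ : ℝ≥0∞) * ENNReal.ofReal ((r ^ 2) ^ (s + 1))) := by
        gcongr with s
        exact htail s
    _ = 1 + (Δ : ℝ≥0∞) * ENNReal.ofReal (r * (1 - r) * (1 - r)⁻¹) := by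
        congr 1
        have h3 : ∀ s : ℕ, c s * ((Δ : ℝ≥0∞) * ENNReal.ofReal ((r ^ 2) ^ (s + 1)))
            = (Δ : ℝ≥0∞) * ENNReal.ofReal (r * (1 - r) * r ^ s) := by
          intro s
          have e1 : r⁻¹ * r ^ 2 = r := by field_simp
          have e2 : (r⁻¹ - 1) * r⁻¹ ^ s * (r ^ 2) ^ (s + 1)
              = ((r⁻¹ - 1) * r ^ 2) * (r⁻¹ * r ^ 2) ^ s := by
            rw [mul_pow, pow_succ]; ring
          have e3 : (r⁻¹ - 1) * r ^ 2 = r * (1 - r) := by field_simp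
          rw [hc, mul_left_comm, ← ENNReal.ofReal_mul (mul_nonneg hb0 (by positivity)),
            e2, e1, e3]
        simp_rw [h3]
        rw [ENNReal.tsum_mul_left, ← ENNReal.ofReal_tsum_of_nonneg
          (fun s => mul_nonneg (mul_nonneg hr0.le (by linarith)) (pow_nonneg hr0.le s))
          (by exact (summable_geometric_of_lt_one hr0.le hr1).mul_left _), tsum_mul_left,
          tsum_geometric_of_lt_one hr0.le hr1]
    _ ≤ 1 + (Δ : ℝ≥0∞) * 1 := by
        gcongr
        rw [mul_assoc, mul_inv_cancel₀ (by linarith : (1:ℝ) - r ≠ 0), mul_one]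
        exact ENNReal.ofReal_le_one.mpr hr1.le
    _ ≤ 2 * Δ := by
        rw [mul_one, two_mul]
        gcongr
        exact_mod_cast hΔ

/-- Fix p ∈ (0,1). There is C > 0 depending only on p such that for
every T ≥ 1 and Δ ≥ 2, if Y_1, …, Y_T are independent random variables, each the
maximum of at most Δ independent geometric random variables with success
probability at least p, then Pr[Σ Y_i ≥ C·(T·ln Δ + t)] ≤ exp(−t) for all t ≥ 0. -/
theorem sum_of_max_of_geometrics_tail (p : ℝ) (hp : p ∈ Set.Ioo (0 : ℝ) 1) :
    ∃ C : ℝ, 0 < C ∧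
      ∀ (T : ℕ), 1 ≤ T → ∀ (Δ : ℕ), 2 ≤ Δ →
      ∀ (Ω : Type) [MeasureSpace Ω] [IsProbabilityMeasure (ℙ : Measure Ω)]
        (Y : Fin T → Ω → ℕ),
        (∀ i, Measurable (Y i)) →
        iIndepFun Y ℙ →
        (∀ i : Fin T, ∃ (k : ℕ) (_ : 1 ≤ k) (_ : k ≤ Δ)
            (G : Fin k → Ω → ℕ) (q : Fin k → ℝ),
          (∀ j, Measurable (G j)) ∧
          (∀ j, p ≤ q j ∧ q j < 1) ∧
          iIndepFun G ℙ ∧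
          (∀ j (s : ℕ), (ℙ {ω | G j ω = s}).toReal = q j * (1 - q j) ^ s) ∧
          (∀ ω, Y i ω = Finset.univ.sup (fun j => G j ω))) →
        ∀ t : ℝ, 0 ≤ t →
          (ℙ {ω | C * ((T : ℝ) * Real.log Δ + t) ≤ ∑ i, (Y i ω : ℝ)}).toReal ≤
            Real.exp (-t) := by
  obtain ⟨hp0, hp1⟩ := hp
  have h1p : 0 < 1 - p := by linarith
  set r : ℝ := Real.sqrt (1 - p) with hrdef
  have hr0 : 0 < r := Real.sqrt_pos.mpr h1p
  have hr2 : r ^ 2 = 1 - p := Real.sq_sqrt h1p.le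
  have hr1 : r < 1 := by nlinarith
  set lam : ℝ := Real.log r⁻¹ with hlamdef
  have hlam : 0 < lam := Real.log_pos ((one_lt_inv₀ hr0).mpr hr1)
  have explam : Real.exp lam = r⁻¹ := Real.exp_log (inv_pos.mpr hr0)
  refine ⟨2 / lam, div_pos two_pos hlam, ?_⟩
  intro T hT Δ hΔ Ω _ _ Y hYmeas hYindep hYmax t ht
  -- per-variable integrability and mgf bound
  have key : ∀ i : Fin T, Integrable (fun ω => Real.exp (lam * (Y i ω : ℝ))) ℙ ∧
      mgf (fun ω => (Y i ω : ℝ)) ℙ lam ≤ 2 * (Δ : ℝ) := by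
    intro i
    obtain ⟨k, hk1, hkΔ, G, q, hGmeas, hq, hGindep, hpmf, hYsup⟩ := hYmax i
    have htail : ∀ s : ℕ, ℙ {ω | s + 1 ≤ Y i ω} ≤ (Δ : ℝ≥0∞) * ENNReal.ofReal ((r ^ 2) ^ (s + 1)) := by
      intro s
      have hsub : {ω | s + 1 ≤ Y i ω} ⊆ ⋃ j : Fin k, {ω | s + 1 ≤ G j ω} := by
        intro ω hω
        simp only [Set.mem_setOf_eq, hYsup ω] at hω
        obtain ⟨j, _, hj⟩ := (Finset.le_sup_iff (by simp : (⊥ : ℕ) < s + 1)).mp hω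
        exact Set.mem_iUnion.mpr ⟨j, hj⟩
      calc ℙ {ω | s + 1 ≤ Y i ω} ≤ ℙ (⋃ j : Fin k, {ω | s + 1 ≤ G j ω}) :=
            measure_mono hsub
        _ ≤ ∑ j : Fin k, ℙ {ω | s + 1 ≤ G j ω} := measure_iUnion_fintype_le _ _
        _ ≤ ∑ _j : Fin k, ENNReal.ofReal ((1 - p) ^ (s + 1)) := by
            refine Finset.sum_le_sum fun j _ => ?_
            rw [geo_tail (G j) (hGmeas j) (q j) (lt_of_lt_of_le hp0 (hq j).1) (hq j).2
              (hpmf j) (s + 1)]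
            exact ENNReal.ofReal_le_ofReal
              (pow_le_pow_left₀ (by linarith [(hq j).2]) (by linarith [(hq j).1]) _)
        _ = (k : ℝ≥0∞) * ENNReal.ofReal ((1 - p) ^ (s + 1)) := by
            rw [Finset.sum_const, Finset.card_univ, Fintype.card_fin, nsmul_eq_mul]
        _ ≤ (Δ : ℝ≥0∞) * ENNReal.ofReal ((r ^ 2) ^ (s + 1)) := by
            rw [hr2]
            exact mul_le_mul_left (Nat.cast_le.mpr hkΔ) _
    have hlint : ∫⁻ ω, ENNReal.ofReal (r⁻¹ ^ Y i ω) ∂ℙ ≤ 2 * (Δ : ℝ≥0∞) :=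
      lintegral_exp_le (Y i) (hYmeas i) r hr0 hr1 Δ (by omega) htail
    have hfun : (fun ω => Real.exp (lam * (Y i ω : ℝ))) = fun ω => r⁻¹ ^ Y i ω := by
      funext ω
      rw [mul_comm, Real.exp_nat_mul, explam]
    have hmeas2 : Measurable fun ω => r⁻¹ ^ Y i ω :=
      (measurable_from_top (f := fun n : ℕ => r⁻¹ ^ n)).comp (hYmeas i)
    have hnn : ∀ ω, 0 ≤ r⁻¹ ^ Y i ω := fun ω => by positivity
    have hint : Integrable (fun ω => Real.exp (lam * (Y i ω : ℝ))) ℙ := by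
      rw [hfun]
      refine ⟨hmeas2.aestronglyMeasurable, ?_⟩
      rw [hasFiniteIntegral_iff_ofReal (ae_of_all _ hnn)]
      exact lt_of_le_of_lt hlint
        (ENNReal.mul_lt_top (by norm_num) (ENNReal.natCast_lt_top Δ))
    refine ⟨hint, ?_⟩
    rw [mgf, hfun, integral_eq_lintegral_of_nonneg_ae (ae_of_all _ hnn)
      hmeas2.aestronglyMeasurable]
    calc (∫⁻ ω, ENNReal.ofReal (r⁻¹ ^ Y i ω) ∂ℙ).toReal
        ≤ (2 * (Δ : ℝ≥0∞)).toReal := ENNReal.toReal_mono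
          (ENNReal.mul_ne_top (by norm_num) (ENNReal.natCast_ne_top Δ)) hlint
      _ = 2 * (Δ : ℝ) := by simp [ENNReal.toReal_mul]
  -- assemble
  set Xf : Fin T → Ω → ℝ := fun i ω => (Y i ω : ℝ) with hXf
  have hXmeas : ∀ i, Measurable (Xf i) :=
    fun i => (measurable_from_top (f := (Nat.cast : ℕ → ℝ))).comp (hYmeas i)
  have hXindep : iIndepFun Xf ℙ :=
    hYindep.comp (fun _ => (Nat.cast : ℕ → ℝ)) (fun _ => measurable_from_top)
  set a : ℝ := 2 / lam * ((T : ℝ) * Real.log Δ + t) with ha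
  have hint_sum : Integrable (fun ω => Real.exp (lam * (∑ i, Xf i) ω)) ℙ :=
    hYindep.comp (fun _ => (Nat.cast : ℕ → ℝ)) (fun _ => measurable_from_top)
      |>.integrable_exp_mul_sum hXmeas (fun i _ => (key i).1)
  have hset : {ω | a ≤ ∑ i, (Y i ω : ℝ)} = {ω | a ≤ (∑ i, Xf i) ω} := by
    ext ω; simp [hXf, Finset.sum_apply]
  have hcher := measure_ge_le_exp_mul_mgf (μ := (ℙ : Measure Ω)) (X := ∑ i, Xf i) a hlam.le
    hint_sum
  have hmgf : mgf (∑ i, Xf i) ℙ lam ≤ (2 * (Δ : ℝ)) ^ T := by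
    rw [hXindep.mgf_sum hXmeas Finset.univ]
    calc ∏ i : Fin T, mgf (Xf i) ℙ lam ≤ ∏ _i : Fin T, (2 * (Δ : ℝ)) :=
          Finset.prod_le_prod (fun i _ => mgf_nonneg) (fun i _ => (key i).2)
      _ = (2 * (Δ : ℝ)) ^ T := by
          rw [Finset.prod_const, Finset.card_univ, Fintype.card_fin]
  have h2Δ : (0:ℝ) < 2 * (Δ : ℝ) := by positivity
  have hlogΔ : Real.log 2 ≤ Real.log Δ :=
    Real.log_le_log (by norm_num) (by exact_mod_cast hΔ)
  have hfinal : Real.exp (-lam * a) * (2 * (Δ : ℝ)) ^ T ≤ Real.exp (-t) := by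
    rw [← Real.exp_log h2Δ, ← Real.exp_nat_mul, ← Real.exp_add, Real.exp_le_exp]
    have hlma : lam * a = 2 * ((T : ℝ) * Real.log Δ + t) := by
      rw [ha]; field_simp
    have hlog2Δ : Real.log (2 * (Δ : ℝ)) = Real.log 2 + Real.log Δ :=
      Real.log_mul (by norm_num) (by positivity)
    have hT0 : (1:ℝ) ≤ T := by exact_mod_cast hT
    nlinarith [hlma, hlog2Δ, hlogΔ, ht, hT0]
  calc (ℙ {ω | a ≤ ∑ i, (Y i ω : ℝ)}).toReal
      = (ℙ {ω | a ≤ (∑ i, Xf i) ω}).toReal := by rw [hset]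
    _ ≤ Real.exp (-lam * a) * mgf (∑ i, Xf i) ℙ lam := hcher
    _ ≤ Real.exp (-lam * a) * (2 * (Δ : ℝ)) ^ T := by
        exact mul_le_mul_of_nonneg_left hmgf (Real.exp_nonneg _)
    _ ≤ Real.exp (-t) := hfinal
end
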